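/- Let PV_1,…,PV_K (K ≥ 1) be real-valued random variables on a probability space (Ω, P), let I_0 ⊆ {1,…,K} be the (arbitrary) index set of true null hypotheses, and assume each PV_i with i ∈ I_0 is superuniform, i.e. P(PV_i ≤ u) ≤ u for all u ∈ [0,1]. Fix α ∈ [0,1]. Holm's step-down procedure is defined as follows: for a realization pv_1,…,pv_K with order statistics pv_(1) ≤ … ≤ pv_(K), hypothesis H_0^i is rejected if and only if pv_(m) ≤ α/(K−m+1) holds for every m = 1,…,R_i, where R_i = #{l : pv_l ≤ pv_i} is the rank of pv_i. Then P(Holm's procedure rejects at least one hypothesis indexed by I_0) ≤ α, i.e. Holm's procedure strongly controls the familywise error rate at level α. -/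

import Mathlib

open MeasureTheory ProbabilityTheory

/-- The `m`-th smallest value (1-based) of `pv : Fin K → ℝ`, i.e. the order statistic
`pv_(m)`, obtained from the sorted list of values. -/
noncomputable def orderStat {K : ℕ} (pv : Fin K → ℝ) (m : ℕ) : ℝ :=
  ((List.ofFn pv).mergeSort (fun a b => a ≤ b)).getD (m - 1) 0

/-- Holm's step-down procedure rejects `H_0^i` iff `pv_(m) ≤ α/(K − m + 1)` for every
`m = 1, …, R_i`, where `R_i = #{l : pv_l ≤ pv_i}` is the rank of `pv_i`. -/
noncomputable def holmRejects (K : ℕ) (α : ℝ) (pv : Fin K → ℝ) (i : Fin K) : Prop :=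
  ∀ m : ℕ, 1 ≤ m → m ≤ (Finset.univ.filter fun l => pv l ≤ pv i).card →
    orderStat pv m ≤ α / ((K : ℝ) - (m : ℝ) + 1)

lemma sorted_getD_countP (L : List ℝ) (hL : L.Pairwise (· ≤ ·)) (x : ℝ) (hx : x ∈ L) :
    L.getD (L.countP (fun a => decide (a < x))) 0 = x := by
  set p : ℝ → Bool := fun a => decide (a < x) with hp
  set c := L.countP p with hc
  have hmono : ∀ i j : ℕ, ∀ hi : i < L.length, ∀ hj : j < L.length, i ≤ j → L[i] ≤ L[j] := by
    intro i j hi hj hij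
    rcases eq_or_lt_of_le hij with rfl | h
    · exact le_refl _
    · exact List.pairwise_iff_getElem.mp hL i j hi hj h
  have hclen : c ≤ L.length := List.countP_le_length (p := p)
  have hlt : c < L.length := by
    rcases lt_or_eq_of_le hclen with h | h
    · exact h
    · exfalso
      have := (List.countP_eq_length (p := p)).mp h x hx
      simp [p] at this
  rw [List.getD_eq_getElem L 0 hlt]
  obtain ⟨t, ht, hxt⟩ := List.mem_iff_getElem.mp hx
  have key1 : L[c] ≤ x := by
    by_contra hcx
    push_neg at hcx
    have htc : t < c := by
      by_contra htc'
      push_neg at htc'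
      have := hmono c t hlt ht htc'
      rw [hxt] at this
      exact absurd (lt_of_lt_of_le hcx this) (lt_irrefl x)
    have hdrop : (L.drop t).countP p = 0 := by
      rw [List.countP_eq_zero]
      intro a ha
      obtain ⟨i, hi, hai⟩ := List.mem_iff_getElem.mp ha
      have hti : t + i < L.length := by
        have := hi; simp [List.length_drop] at this; omega
      rw [List.getElem_drop] at hai
      have hle : L[t] ≤ L[t+i]'hti := hmono t (t+i) ht hti (Nat.le_add_right _ _)
      rw [hxt, hai] at hle
      simp [p, not_lt.mpr hle]
    have hsum : L.countP p = (L.take t).countP p + (L.drop t).countP p := by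
      rw [← List.countP_append, List.take_append_drop]
    rw [hdrop, Nat.add_zero] at hsum
    have h2 : (L.take t).countP p ≤ t :=
      le_trans (List.countP_le_length (p := p)) (by rw [List.length_take]; omega)
    omega
  have key2 : x ≤ L[c] := by
    by_contra hcx
    push_neg at hcx
    have hlen' : (L.take (c+1)).length = c + 1 := by
      rw [List.length_take]; omega
    have htake : (L.take (c+1)).countP p = (L.take (c+1)).length := by
      apply List.countP_eq_length.mpr
      intro a ha
      obtain ⟨i, hi, hai⟩ := List.mem_iff_getElem.mp ha
      rw [List.getElem_take] at hai
      have hic : i ≤ c := by rw [hlen'] at hi; omega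
      have hle : L[i]'(by omega) ≤ L[c] := hmono i c (by omega) hlt hic
      rw [hai] at hle
      simp [p]
      exact lt_of_le_of_lt hle hcx
    have hsum : L.countP p = (L.take (c+1)).countP p + (L.drop (c+1)).countP p := by
      rw [← List.countP_append, List.take_append_drop]
    rw [htake, hlen'] at hsum
    omega
  exact le_antisymm key1 key2

lemma orderStat_countLt {K : ℕ} (pv : Fin K → ℝ) (j : Fin K) :
    orderStat pv ((Finset.univ.filter fun l => pv l < pv j).card + 1) = pv j := by
  unfold orderStat
  simp only [Nat.add_sub_cancel]
  set L := (List.ofFn pv).mergeSort (fun a b => a ≤ b) with hLdef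
  have hsorted : L.Pairwise (· ≤ ·) := by
    have := List.pairwise_mergeSort (le := fun a b : ℝ => decide (a ≤ b))
      (fun a b c hab hbc => by simp_all; linarith)
      (fun a b => by simpa using le_total a b) (List.ofFn pv)
    exact this.imp (fun h => by simpa using h)
  have hperm : L.Perm (List.ofFn pv) := List.mergeSort_perm _ _
  have hmem : pv j ∈ L := hperm.mem_iff.mpr (by simp [List.mem_ofFn])
  have hcount : L.countP (fun a => decide (a < pv j)) =
      (Finset.univ.filter fun l => pv l < pv j).card := by
    rw [hperm.countP_eq, List.ofFn_eq_map, List.countP_map]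
    rw [show ((fun a => decide (a < pv j)) ∘ pv) = fun l => decide (pv l < pv j) from rfl]
    rw [List.countP_eq_length_filter, Finset.card, Finset.filter_val, Fin.univ_def]
    simp
  rw [← hcount]
  exact sorted_getD_countP L hsorted (pv j) hmem

/-- **Strong FWER control of Holm's step-down procedure.**  If the p-values of the true null
hypotheses (indexed by `I₀`) are superuniform, then the probability that Holm's procedure
rejects at least one true hypothesis is at most `α`. -/
theorem holm_strong_FWER_control
    {Ω : Type*} [MeasurableSpace Ω] (P : Measure Ω) [IsProbabilityMeasure P]
    (K : ℕ) (hK : 1 ≤ K)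
    (PV : Fin K → Ω → ℝ) (hPV : ∀ i, Measurable (PV i))
    (I₀ : Finset (Fin K))
    (hsuper : ∀ i ∈ I₀, ∀ u ∈ Set.Icc (0 : ℝ) 1,
      P {ω | PV i ω ≤ u} ≤ ENNReal.ofReal u)
    (α : ℝ) (hα : α ∈ Set.Icc (0 : ℝ) 1) :
    P {ω | ∃ i ∈ I₀, holmRejects K α (fun l => PV l ω) i} ≤ ENNReal.ofReal α := by
  obtain ⟨hα0, hα1⟩ := hα
  rcases I₀.eq_empty_or_nonempty with rfl | hI
  · simp
  set n := I₀.card with hn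
  have hn1 : 1 ≤ n := Finset.card_pos.mpr hI
  have hnK : n ≤ K := by
    simpa using Finset.card_le_card (Finset.subset_univ I₀)
  have hnR : (1:ℝ) ≤ (n:ℝ) := by exact_mod_cast hn1
  set u := α / n with hu
  have hu0 : 0 ≤ u := div_nonneg hα0 (by positivity)
  have huα : u ≤ α := by
    rw [hu]
    exact div_le_self hα0 hnR
  have hu1 : u ≤ 1 := huα.trans hα1
  -- inclusion
  have hsub : {ω | ∃ i ∈ I₀, holmRejects K α (fun l => PV l ω) i} ⊆
      ⋃ i ∈ I₀, {ω | PV i ω ≤ u} := by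
    rintro ω ⟨i, hi, hrej⟩
    set pv : Fin K → ℝ := fun l => PV l ω with hpv
    obtain ⟨j, hj, hmin⟩ := Finset.exists_min_image I₀ pv hI
    set c := (Finset.univ.filter fun l => pv l < pv j).card with hc
    -- c + 1 ≤ rank of i
    have hins : insert j (Finset.univ.filter fun l => pv l < pv j) ⊆
        Finset.univ.filter fun l => pv l ≤ pv i := by
      intro l hl
      simp only [Finset.mem_insert, Finset.mem_filter, Finset.mem_univ, true_and] at hl ⊢
      rcases hl with rfl | hl
      · exact hmin i hi
      · exact (hl.trans_le (hmin i hi)).le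
    have hjnot : j ∉ (Finset.univ.filter fun l => pv l < pv j) := by
      simp
    have hm2 : c + 1 ≤ (Finset.univ.filter fun l => pv l ≤ pv i).card := by
      have h := Finset.card_le_card hins
      rw [Finset.card_insert_of_notMem hjnot] at h
      rw [hc]
      exact h
    have key := hrej (c + 1) (Nat.le_add_left 1 c) hm2
    rw [orderStat_countLt pv j] at key
    -- c ≤ K - n
    have hcKn : c + n ≤ K := by
      have hsub2 : (Finset.univ.filter fun l => pv l < pv j) ⊆ Finset.univ \ I₀ := by
        intro l hl
        simp only [Finset.mem_filter, Finset.mem_univ, true_and, Finset.mem_sdiff] at hl ⊢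
        exact fun hlI => absurd hl (not_lt.mpr (hmin l hlI))
      have := Finset.card_le_card hsub2
      rw [Finset.card_sdiff_of_subset (Finset.subset_univ I₀), Finset.card_univ, Fintype.card_fin] at this
      omega
    have hden : (n:ℝ) ≤ (K:ℝ) - ((c:ℝ) + 1) + 1 := by
      have : ((c:ℝ) + (n:ℝ)) ≤ (K:ℝ) := by exact_mod_cast hcKn
      linarith
    have hfin : pv j ≤ u := by
      refine key.trans ?_
      rw [hu]
      gcongr
      push_cast at hden ⊢
      linarith
    exact Set.mem_biUnion hj hfin
  calc P {ω | ∃ i ∈ I₀, holmRejects K α (fun l => PV l ω) i}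
      ≤ P (⋃ i ∈ I₀, {ω | PV i ω ≤ u}) := measure_mono hsub
    _ ≤ ∑ i ∈ I₀, P {ω | PV i ω ≤ u} := measure_biUnion_finset_le I₀ _
    _ ≤ ∑ _i ∈ I₀, ENNReal.ofReal u := by
        apply Finset.sum_le_sum
        intro i hi
        exact hsuper i hi u ⟨hu0, hu1⟩
    _ = n * ENNReal.ofReal u := by rw [Finset.sum_const, nsmul_eq_mul]
    _ = ENNReal.ofReal α := by
        rw [← ENNReal.ofReal_natCast n, ← ENNReal.ofReal_mul (by positivity)]
        congr 1
        rw [hu]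
        field_simp
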